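/- ι̃(J(n⃗',k⃗)) ⊆ J(n⃗,k⃗), i.e. the algebra homomorphism ι̃ maps the defining ideal for the data (n⃗',k⃗) into the defining ideal for (n⃗,k⃗). -/

import Mathlib

open MvPolynomial

noncomputable section

variable (n : ℕ)

/-- the variables `x_a[i]`, `1 ≤ a ≤ n-1`, `0 ≤ i ≤ Nb_a - 1`, for a general bound
function `Nb` -/
abbrev IdxB (Nb : Fin (n - 1) → ℕ) : Type := {q : Fin (n - 1) × ℕ // q.2 < Nb q.1}

/-- the polynomial ring `ℂ[x_a[i] : 0 ≤ i ≤ Nb_a - 1]` -/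
abbrev RB (Nb : Fin (n - 1) → ℕ) := MvPolynomial (IdxB n Nb) ℂ

/-- the current `x_a(z) = ∑_{i=0}^{Nb_a-1} x_a[i] z^{Nb_a-1-i}` -/
def xcurB (Nb : Fin (n - 1) → ℕ) (a : Fin (n - 1)) : Polynomial (RB n Nb) :=
  ∑ i ∈ (Finset.range (Nb a)).attach,
    Polynomial.C (X (⟨(a, i.1), Finset.mem_range.mp i.2⟩ : IdxB n Nb)) *
      Polynomial.X ^ (Nb a - 1 - i.1)

/-- `μ(ν, k⃗) = ∑_p max(∑_{a=1}^{n_p-1} ν_a - k_p, 0)` -/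
def muB (N : ℕ) (nn kk : Fin N → ℕ) (ν : Fin (n - 1) → ℕ) : ℕ :=
  ∑ p : Fin N,
    ((∑ a ∈ Finset.univ.filter (fun a : Fin (n - 1) => a.val + 1 < nn p), ν a) - kk p)

/-- the ideal `J(n⃗,k⃗)` generated by the coefficients of `z^j` in `∏_a x_a(z)^{ν_a}`,
over all `ν` and `j < μ(ν,k⃗)` -/
def JB (Nb : Fin (n - 1) → ℕ) (N : ℕ) (nn kk : Fin N → ℕ) : Ideal (RB n Nb) :=
  Ideal.span {c | ∃ (ν : Fin (n - 1) → ℕ) (j : ℕ), j < muB n N nn kk ν ∧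
    c = (∏ a : Fin (n - 1), (xcurB n Nb a) ^ (ν a)).coeff j}

/-- `N_a = #{p : n_p > a}` -/
def NAB (N : ℕ) (nn : Fin N → ℕ) (a : Fin (n - 1)) : ℕ :=
  (Finset.univ.filter (fun p : Fin N => a.val + 1 < nn p)).card

/-- a "total" version of the variable `x_b[i]` -/
def XV (Nb : Fin (n - 1) → ℕ) (b : Fin (n - 1)) (i : ℕ) : RB n Nb :=
  if h : i < Nb b then X ⟨(b, i), h⟩ else 0

lemma XV_lt (Nb : Fin (n - 1) → ℕ) (b : Fin (n - 1)) (i : ℕ) (h : i < Nb b) :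
    XV n Nb b i = X ⟨(b, i), h⟩ := dif_pos h

lemma xcurB_eq (Nb : Fin (n - 1) → ℕ) (b : Fin (n - 1)) (m : ℕ) (hm : Nb b = m) :
    xcurB n Nb b = ∑ i ∈ Finset.range m,
      Polynomial.C (XV n Nb b i) * Polynomial.X ^ (m - 1 - i) := by
  subst hm
  rw [xcurB, ← Finset.sum_attach (Finset.range (Nb b)) (fun i =>
    Polynomial.C (XV n Nb b i) * Polynomial.X ^ (Nb b - 1 - i))]
  refine Finset.sum_congr rfl fun i _ => ?_
  rw [XV, dif_pos (Finset.mem_range.mp i.2)]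

/-- the key combinatorial inequality on `μ` -/
lemma mu_le_aux (n N : ℕ) (nn kk : Fin N → ℕ) (p : Fin N) (a : Fin (n - 1))
    (ha : a.val + 2 = nn p) (ν : Fin (n - 1) → ℕ) (m : ℕ) (hm : m ≤ ν a) :
    muB n N (Function.update nn p (nn p - 1)) kk ν ≤
      muB n N nn kk (Function.update ν a m) + (ν a - m) * (NAB n N nn a - 1) := by
  have hMa : 1 ≤ NAB n N nn a := Finset.card_pos.mpr ⟨p, by simp; omega⟩
  set t := ν a - m with ht
  have hmul : t * NAB n N nn a = t * (NAB n N nn a - 1) + t := by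
    conv_lhs => rw [show NAB n N nn a = (NAB n N nn a - 1) + 1 by omega]
    ring
  have hsum : t * NAB n N nn a
      = ∑ s : Fin N, if a.val + 1 < nn s then t else 0 := by
    rw [NAB, ← Finset.sum_filter, Finset.sum_const, smul_eq_mul, mul_comm]
  have key : muB n N (Function.update nn p (nn p - 1)) kk ν + t ≤
      muB n N nn kk (Function.update ν a m) + t * NAB n N nn a := by
    rw [hsum, muB, muB, ← Finset.sum_add_distrib]
    rw [← Finset.sum_erase_add Finset.univ _ (Finset.mem_univ p),
      ← Finset.sum_erase_add Finset.univ
        (fun s => ((∑ b ∈ Finset.univ.filter (fun b : Fin (n - 1) => b.val + 1 < nn s),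
          Function.update ν a m b) - kk s) + if a.val + 1 < nn s then t else 0)
        (Finset.mem_univ p)]
    have h1 : ∑ s ∈ Finset.univ.erase p,
        ((∑ b ∈ Finset.univ.filter
          (fun b : Fin (n - 1) => b.val + 1 < Function.update nn p (nn p - 1) s), ν b) - kk s)
        ≤ ∑ s ∈ Finset.univ.erase p,
        (((∑ b ∈ Finset.univ.filter (fun b : Fin (n - 1) => b.val + 1 < nn s),
          Function.update ν a m b) - kk s) + if a.val + 1 < nn s then t else 0) := by
      refine Finset.sum_le_sum fun s hs => ?_
      have hsp : s ≠ p := Finset.ne_of_mem_erase hs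
      rw [Function.update_of_ne hsp]
      by_cases hc : a.val + 1 < nn s
      · rw [if_pos hc]
        have haT : a ∈ Finset.univ.filter (fun b : Fin (n - 1) => b.val + 1 < nn s) := by
          simp [hc]
        rw [← Finset.add_sum_erase _ ν haT, ← Finset.add_sum_erase _ _ haT,
          Function.update_self]
        have he : ∑ b ∈ (Finset.univ.filter
              (fun b : Fin (n - 1) => b.val + 1 < nn s)).erase a,
            Function.update ν a m b
            = ∑ b ∈ (Finset.univ.filter
              (fun b : Fin (n - 1) => b.val + 1 < nn s)).erase a, ν b :=
          Finset.sum_congr rfl fun b hb =>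
            Function.update_of_ne (Finset.ne_of_mem_erase hb) _ _
        rw [he]
        omega
      · rw [if_neg hc]
        have he : ∑ b ∈ Finset.univ.filter (fun b : Fin (n - 1) => b.val + 1 < nn s),
            Function.update ν a m b
            = ∑ b ∈ Finset.univ.filter (fun b : Fin (n - 1) => b.val + 1 < nn s), ν b :=
          Finset.sum_congr rfl fun b hb =>
            Function.update_of_ne (by rintro rfl; exact hc (Finset.mem_filter.mp hb).2) _ _
        rw [he]
        omega
    have h2 : ((∑ b ∈ Finset.univ.filter
          (fun b : Fin (n - 1) => b.val + 1 < Function.update nn p (nn p - 1) p), ν b) - kk p) + t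
        ≤ ((∑ b ∈ Finset.univ.filter (fun b : Fin (n - 1) => b.val + 1 < nn p),
          Function.update ν a m b) - kk p) + if a.val + 1 < nn p then t else 0 := by
      rw [Function.update_self, if_pos (by omega : a.val + 1 < nn p)]
      have hins : Finset.univ.filter (fun b : Fin (n - 1) => b.val + 1 < nn p)
          = insert a (Finset.univ.filter
            (fun b : Fin (n - 1) => b.val + 1 < nn p - 1)) := by
        ext b
        simp only [Finset.mem_filter, Finset.mem_insert, Finset.mem_univ, true_and,
          Fin.ext_iff]
        omega
      have hna : a ∉ Finset.univ.filter (fun b : Fin (n - 1) => b.val + 1 < nn p - 1) := by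
        simp; omega
      rw [hins, Finset.sum_insert hna, Function.update_self]
      have he : ∑ b ∈ Finset.univ.filter (fun b : Fin (n - 1) => b.val + 1 < nn p - 1),
          Function.update ν a m b
          = ∑ b ∈ Finset.univ.filter (fun b : Fin (n - 1) => b.val + 1 < nn p - 1), ν b :=
        Finset.sum_congr rfl fun b hb =>
          Function.update_of_ne (by rintro rfl; exact hna hb) _ _
      rw [he]
      omega
    omega
  omega

/-- the main auxiliary lemma: `ι̃` maps `J(n⃗',k⃗)` into `J(n⃗,k⃗)`, for any set-map `ι`
with the correct first components -/
lemma stmt6_aux (n N : ℕ) (nn kk : Fin N → ℕ) (p : Fin N)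
    (a : Fin (n - 1)) (ha : a.val + 2 = nn p)
    (Nb' : Fin (n - 1) → ℕ)
    (hNb'def : Nb' = fun b => NAB n N nn b - (if b = a then 1 else 0))
    (ι : IdxB n Nb' → IdxB n (NAB n N nn))
    (hι : ∀ q, (ι q).1 = (q.1.1, q.1.2 + if q.1.1 = a then 1 else 0)) :
    ∀ u ∈ JB n Nb' N (Function.update nn p (nn p - 1)) kk,
      rename ι u ∈ JB n (NAB n N nn) N nn kk := by
  have hMa : 1 ≤ NAB n N nn a := Finset.card_pos.mpr ⟨p, by simp; omega⟩
  have hNb'a : Nb' a = NAB n N nn a - 1 := by rw [hNb'def]; simp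
  have hNb'ne : ∀ b, b ≠ a → Nb' b = NAB n N nn b := by
    intro b hb; rw [hNb'def]; simp [hb]
  have hRX : ∀ q : IdxB n Nb',
      (rename ι).toRingHom (X q) = (X (ι q) : RB n (NAB n N nn)) :=
    fun q => rename_X ι q
  -- image of x'_b for b ≠ a
  have hne : ∀ b : Fin (n - 1), b ≠ a →
      (xcurB n Nb' b).map (rename ι).toRingHom = xcurB n (NAB n N nn) b := by
    intro b hb
    rw [xcurB_eq n Nb' b (Nb' b) rfl, xcurB_eq n (NAB n N nn) b (Nb' b) (hNb'ne b hb).symm,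
      Polynomial.map_sum]
    refine Finset.sum_congr rfl fun i hi => ?_
    have hi' : i < Nb' b := Finset.mem_range.mp hi
    have hi'' : i < NAB n N nn b := by rw [← hNb'ne b hb]; exact hi'
    rw [Polynomial.map_mul, Polynomial.map_pow, Polynomial.map_C, Polynomial.map_X,
      XV_lt n Nb' b i hi', XV_lt n (NAB n N nn) b i hi'', hRX]
    have hx : ι ⟨(b, i), hi'⟩ = ⟨(b, i), hi''⟩ := by
      apply Subtype.ext
      rw [hι]
      simp [hb]
    rw [hx]
  -- image of x'_a
  have h0 : (0 : ℕ) < NAB n N nn a := hMa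
  have hsucc : NAB n N nn a = Nb' a + 1 := by omega
  have hxa : xcurB n (NAB n N nn) a = (xcurB n Nb' a).map (rename ι).toRingHom +
      Polynomial.C (X (⟨(a, 0), h0⟩ : IdxB n (NAB n N nn))) * Polynomial.X ^ (Nb' a) := by
    rw [xcurB_eq n (NAB n N nn) a (Nb' a + 1) hsucc, Finset.sum_range_succ',
      xcurB_eq n Nb' a (Nb' a) rfl, Polynomial.map_sum]
    refine congrArg₂ (· + ·) ?_ ?_
    · refine Finset.sum_congr rfl fun i hi => ?_
      have hi' : i < Nb' a := Finset.mem_range.mp hi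
      have hi'' : i + 1 < NAB n N nn a := by omega
      rw [Polynomial.map_mul, Polynomial.map_pow, Polynomial.map_C, Polynomial.map_X,
        XV_lt n Nb' a i hi', XV_lt n (NAB n N nn) a (i + 1) hi'', hRX]
      have hx : ι ⟨(a, i), hi'⟩ = ⟨(a, i + 1), hi''⟩ := by
        apply Subtype.ext
        rw [hι]
        simp
      rw [hx]
      congr 2
      omega
    · rw [XV_lt n (NAB n N nn) a 0 h0]
      congr 2
  -- reduce to generators
  intro u hu
  have hsub : {c | ∃ (ν : Fin (n - 1) → ℕ) (j : ℕ),
      j < muB n N (Function.update nn p (nn p - 1)) kk ν ∧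
      c = (∏ b : Fin (n - 1), (xcurB n Nb' b) ^ (ν b)).coeff j}
      ⊆ ↑(Ideal.comap (rename ι).toRingHom (JB n (NAB n N nn) N nn kk)) := by
    rintro c ⟨ν, j, hj, rfl⟩
    rw [SetLike.mem_coe, Ideal.mem_comap]
    have hcoeff : (rename ι).toRingHom ((∏ b : Fin (n - 1), (xcurB n Nb' b) ^ (ν b)).coeff j)
        = ((∏ b : Fin (n - 1), ((xcurB n Nb' b).map (rename ι).toRingHom) ^ (ν b))).coeff j := by
      rw [← Polynomial.coeff_map, Polynomial.map_prod]
      simp only [Polynomial.map_pow]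
    rw [hcoeff]
    -- split the product and expand the binomial
    have hprod : ∏ b : Fin (n - 1), ((xcurB n Nb' b).map (rename ι).toRingHom) ^ (ν b)
        = (xcurB n (NAB n N nn) a -
            Polynomial.C (X (⟨(a, 0), h0⟩ : IdxB n (NAB n N nn))) * Polynomial.X ^ (Nb' a)) ^ (ν a) *
          ∏ b ∈ Finset.univ.erase a, (xcurB n (NAB n N nn) b) ^ (ν b) := by
      rw [← Finset.mul_prod_erase Finset.univ
        (fun b => ((xcurB n Nb' b).map (rename ι).toRingHom) ^ (ν b)) (Finset.mem_univ a)]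
      congr 1
      · rw [show (xcurB n Nb' a).map (rename ι).toRingHom = xcurB n (NAB n N nn) a -
            Polynomial.C (X (⟨(a, 0), h0⟩ : IdxB n (NAB n N nn))) * Polynomial.X ^ (Nb' a) from by
          rw [hxa]; ring]
      · exact Finset.prod_congr rfl fun b hb => by
          rw [hne b (Finset.ne_of_mem_erase hb)]
    rw [hprod, sub_pow, Finset.sum_mul, Polynomial.finset_sum_coeff]
    refine Ideal.sum_mem _ fun m hm => ?_
    have hm' : m ≤ ν a := by
      have := Finset.mem_range.mp hm; omega
    have hterm : (-1 : Polynomial (RB n (NAB n N nn))) ^ (m + ν a) *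
          (xcurB n (NAB n N nn) a) ^ m *
          (Polynomial.C (X (⟨(a, 0), h0⟩ : IdxB n (NAB n N nn))) *
            Polynomial.X ^ (Nb' a)) ^ (ν a - m) *
          ((((ν a).choose m : ℕ)) : Polynomial (RB n (NAB n N nn))) *
          ∏ b ∈ Finset.univ.erase a, (xcurB n (NAB n N nn) b) ^ (ν b)
        = Polynomial.C ((-1 : RB n (NAB n N nn)) ^ (m + ν a) *
            (((ν a).choose m : ℕ) : RB n (NAB n N nn)) *
            (X (⟨(a, 0), h0⟩ : IdxB n (NAB n N nn))) ^ (ν a - m)) *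
          ((∏ b : Fin (n - 1), (xcurB n (NAB n N nn) b) ^ (Function.update ν a m b)) *
            Polynomial.X ^ (Nb' a * (ν a - m))) := by
      rw [← Finset.mul_prod_erase Finset.univ
        (fun b => (xcurB n (NAB n N nn) b) ^ (Function.update ν a m b)) (Finset.mem_univ a),
        Function.update_self]
      have he : ∏ b ∈ Finset.univ.erase a,
          (xcurB n (NAB n N nn) b) ^ (Function.update ν a m b)
          = ∏ b ∈ Finset.univ.erase a, (xcurB n (NAB n N nn) b) ^ (ν b) :=
        Finset.prod_congr rfl fun b hb => by
          rw [Function.update_of_ne (Finset.ne_of_mem_erase hb)]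
      rw [he, mul_pow, ← Polynomial.C_pow, ← pow_mul]
      simp only [map_mul, map_pow, map_neg, map_one, Polynomial.C_eq_natCast]
      ring
    rw [hterm, Polynomial.coeff_C_mul, Polynomial.coeff_mul_X_pow']
    split_ifs with hle
    · refine Ideal.mul_mem_left _ _ ?_
      refine Ideal.subset_span ⟨Function.update ν a m, j - Nb' a * (ν a - m), ?_, rfl⟩
      have hkey := mu_le_aux n N nn kk p a ha ν m hm'
      have heq : Nb' a * (ν a - m) = (ν a - m) * (NAB n N nn a - 1) := by
        rw [hNb'a]; ring
      omega
    · rw [mul_zero]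
      exact Ideal.zero_mem _
  have hmem := Ideal.span_le.mpr hsub hu
  exact Ideal.mem_comap.mp hmem

/-- Proposition 2.2: fix `p` with `n_p ≥ 2`, `k_p > 0`, `k_s ≤ k_p`
whenever `n_s ≥ n_p`, and let `a = n_p - 1`, `n⃗' = (n_1,…,n_p-1,…,n_N)`,
`N'_b = N_b - δ_{ab}`.  Then the algebra homomorphism `ι̃ : R' → R`,
`x_b[i] ↦ x_b[i + δ_{ab}]`, maps `J(n⃗',k⃗)` into `J(n⃗,k⃗)`. -/
theorem stmt6 (n N : ℕ) (hn : 2 ≤ n) (hN : 1 ≤ N) (nn kk : Fin N → ℕ)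
    (hnn : ∀ q, 1 ≤ nn q ∧ nn q ≤ n)
    (p : Fin N) (hp2 : 2 ≤ nn p) (hkp : 1 ≤ kk p)
    (hmax : ∀ s : Fin N, nn p ≤ nn s → kk s ≤ kk p)
    (a : Fin (n - 1)) (ha : a.val + 2 = nn p) :
    ∀ u ∈ JB n (fun b => NAB n N nn b - (if b = a then 1 else 0)) N
        (Function.update nn p (nn p - 1)) kk,
      rename
        (fun q : IdxB n (fun b => NAB n N nn b - (if b = a then 1 else 0)) =>
          (⟨(q.1.1, q.1.2 + if q.1.1 = a then 1 else 0), by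
            have h2 := q.2
            by_cases h : q.1.1 = a <;> simp only [h, if_pos, if_neg, if_true, if_false] at h2 ⊢ <;> omega⟩ :
            IdxB n (NAB n N nn))) u
        ∈ JB n (NAB n N nn) N nn kk := by
  exact stmt6_aux n N nn kk p a ha _ rfl _ (fun q => rfl)

end
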